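/- arXiv:1103.5155 — 2 statements merged into one kernel-verified Lean document; each statement's English description precedes it below -/
import Mathlib

section
/- For every n ≥ 1 and every natural number d, the integer ∑_{m | n} μ(m) d^{n/m} is divisible by n; that is, the Witt function χ_n(d) is a nonnegative integer. -/
open Finset ArithmeticFunction
open scoped ArithmeticFunction.Moebius ArithmeticFunction.zeta

/-- The Witt function `χ_n(d) = (1/n) ∑_{m ∣ n} μ(m) d^(n/m)`. -/
noncomputable def wittInt (n d : ℕ) : ℤ :=
  (∑ m ∈ n.divisors, (ArithmeticFunction.moebius m) * (d : ℤ) ^ (n / m)) / n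

lemma fermat_int (p : ℕ) (hp : p.Prime) (x : ℤ) : (p : ℤ) ∣ x ^ p - x := by
  haveI : Fact p.Prime := ⟨hp⟩
  have h : ((x ^ p - x : ℤ) : ZMod p) = 0 := by
    push_cast
    rw [ZMod.pow_card]
    ring
  exact (ZMod.intCast_zmod_eq_zero_iff_dvd _ p).mp h

lemma pow_pow_dvd (p k : ℕ) (hp : p.Prime) (hk : 1 ≤ k) (x : ℤ) :
    (p : ℤ) ^ k ∣ x ^ p ^ k - x ^ p ^ (k - 1) := by
  have h := dvd_sub_pow_of_dvd_sub (fermat_int p hp x) (k - 1)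
  have h1 : k - 1 + 1 = k := by omega
  have h2 : (x ^ p) ^ p ^ (k - 1) = x ^ p ^ k := by
    rw [← pow_mul, ← pow_succ', h1]
  rwa [h1, h2] at h

lemma sum_divisors_prime_mul {p s : ℕ} (hp : p.Prime) (hs : s ≠ 0) (hps : ¬p ∣ s)
    (f : ℕ → ℤ) :
    ∑ m ∈ (p * s).divisors, f m = ∑ m ∈ s.divisors, f m + ∑ m ∈ s.divisors, f (p * m) := by
  have hps0 : p * s ≠ 0 := Nat.mul_ne_zero hp.pos.ne' hs
  have hset : (p * s).divisors = s.divisors ∪ s.divisors.image (p * ·) := by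
    ext m
    simp only [Nat.mem_divisors, Finset.mem_union, Finset.mem_image]
    constructor
    · rintro ⟨hm, -⟩
      by_cases hpm : p ∣ m
      · obtain ⟨m', rfl⟩ := hpm
        right
        refine ⟨m', ⟨?_, hs⟩, rfl⟩
        exact (mul_dvd_mul_iff_left hp.pos.ne').mp hm
      · left
        have hcop : m.Coprime p := ((hp.coprime_iff_not_dvd).mpr hpm).symm
        exact ⟨hcop.dvd_of_dvd_mul_left hm, hs⟩
    · rintro (⟨hm, -⟩ | ⟨m', ⟨hm', -⟩, rfl⟩)
      · exact ⟨hm.mul_left p, hps0⟩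
      · exact ⟨mul_dvd_mul_left p hm', hps0⟩
  have hdisj : Disjoint s.divisors (s.divisors.image (p * ·)) := by
    rw [Finset.disjoint_left]
    rintro m hm hm'
    obtain ⟨m', -, rfl⟩ := Finset.mem_image.mp hm'
    exact hps ((dvd_mul_right p m').trans (Nat.mem_divisors.mp hm).1)
  rw [hset, Finset.sum_union hdisj, Finset.sum_image]
  intro a _ b _ h
  exact Nat.eq_of_mul_eq_mul_left hp.pos h

lemma squarefree_dvd_trans {m n p s k : ℕ} (hp : p.Prime) (hm : Squarefree m)
    (hn0 : n ≠ 0) (hs : s ≠ 0) (hmn : m ∣ n) (hns : n = p ^ k * s) : m ∣ p * s := by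
  have hm0 : m ≠ 0 := hm.ne_zero
  have hps0 : p * s ≠ 0 := Nat.mul_ne_zero hp.pos.ne' hs
  rw [← Nat.factorization_le_iff_dvd hm0 hps0]
  intro q
  have hfps : (p * s).factorization q = p.factorization q + s.factorization q := by
    rw [Nat.factorization_mul hp.pos.ne' hs]; rfl
  by_cases hq : q = p
  · rw [hfps, hq]
    have h1 : m.factorization p ≤ 1 :=
      (Nat.squarefree_iff_factorization_le_one hm0).mp hm p
    have h2 : p.factorization p = 1 := by
      rw [hp.factorization]; simp
    omega
  · have h1 : m.factorization q ≤ n.factorization q :=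
      (Nat.factorization_le_iff_dvd hm0 hn0).mpr hmn q
    have h2 : n.factorization q = s.factorization q := by
      have hpk : (p ^ k).factorization q = 0 := by
        rw [hp.factorization_pow, Finsupp.single_apply, if_neg (fun h => hq h.symm)]
      rw [hns, Nat.factorization_mul (pow_ne_zero _ hp.pos.ne') hs, Finsupp.add_apply, hpk,
        zero_add]
    have h3 : p.factorization q = 0 := by
      rw [hp.factorization, Finsupp.single_apply, if_neg (fun h => hq h.symm)]
    omega

lemma prime_pow_dvd_sum (n d p : ℕ) (hn0 : n ≠ 0) (hp : p.Prime) (hpn : p ∣ n) :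
    (p : ℤ) ^ n.factorization p ∣
      ∑ m ∈ n.divisors, (ArithmeticFunction.moebius m) * (d : ℤ) ^ (n / m) := by
  set k := n.factorization p with hk
  have hk1 : 1 ≤ k := by
    have := Nat.Prime.factorization_pos_of_dvd hp hn0 hpn
    omega
  set s := n / p ^ k with hsdef
  have hns : n = p ^ k * s := (Nat.ordProj_mul_ordCompl_eq_self n p).symm
  have hs0 : s ≠ 0 := (Nat.ordCompl_pos p hn0).ne'
  have hps : ¬p ∣ s := Nat.not_dvd_ordCompl hp hn0
  -- restrict the sum to divisors of p * s
  have hdvd : p * s ∣ n := by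
    rw [hns]
    exact mul_dvd_mul_right (dvd_pow_self p (by omega)) s
  have hsub : (p * s).divisors ⊆ n.divisors := Nat.divisors_subset_of_dvd hn0 hdvd
  have h1 : ∑ m ∈ n.divisors, (μ m : ℤ) * (d : ℤ) ^ (n / m)
      = ∑ m ∈ (p * s).divisors, (μ m : ℤ) * (d : ℤ) ^ (n / m) := by
    rw [Finset.sum_subset hsub]
    intro m hm hm'
    have hmn : m ∣ n := (Nat.mem_divisors.mp hm).1
    have hsq : ¬Squarefree m := by
      intro hsq
      exact hm' (Nat.mem_divisors.mpr ⟨squarefree_dvd_trans hp hsq hn0 hs0 hmn hns,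
        Nat.mul_ne_zero hp.pos.ne' hs0⟩)
    rw [moebius_eq_zero_of_not_squarefree hsq]
    simp
  rw [h1, sum_divisors_prime_mul hp hs0 hps, ← Finset.sum_add_distrib]
  apply Finset.dvd_sum
  intro m hm
  have hmd : m ∣ s := (Nat.mem_divisors.mp hm).1
  have hm0 : m ≠ 0 := fun h => hs0 (by simpa [h] using (Nat.eq_zero_of_zero_dvd (h ▸ hmd)))
  have hpm : ¬p ∣ m := fun h => hps (h.trans hmd)
  have hcop : Nat.Coprime p m := (hp.coprime_iff_not_dvd).mpr hpm
  have hmu : (μ (p * m) : ℤ) = -(μ m) := by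
    rw [isMultiplicative_moebius.map_mul_of_coprime hcop, moebius_apply_prime hp]
    ring
  set t := s / m with ht
  have hst : s = m * t := (Nat.mul_div_cancel' hmd).symm
  have hnm : n / m = p ^ k * t := by
    rw [hns, Nat.mul_div_assoc _ hmd]
  have hnpm : n / (p * m) = p ^ (k - 1) * t := by
    have : n = (p * m) * (p ^ (k - 1) * t) := by
      rw [hns, hst]
      have : p * p ^ (k - 1) = p ^ k := by
        rw [← pow_succ']
        congr 1
        omega
      rw [← this]
      ring
    rw [this, Nat.mul_div_cancel_left _ (Nat.mul_pos hp.pos (Nat.pos_of_ne_zero hm0))]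
  have key : (p : ℤ) ^ k ∣ ((d : ℤ) ^ t) ^ p ^ k - ((d : ℤ) ^ t) ^ p ^ (k - 1) :=
    pow_pow_dvd p k hp hk1 _
  have : (μ m : ℤ) * (d : ℤ) ^ (n / m) + (μ (p * m) : ℤ) * (d : ℤ) ^ (n / (p * m))
      = (μ m : ℤ) * (((d : ℤ) ^ t) ^ p ^ k - ((d : ℤ) ^ t) ^ p ^ (k - 1)) := by
    rw [hmu, hnm, hnpm, mul_comm (p ^ k) t, mul_comm (p ^ (k - 1)) t, pow_mul, pow_mul]
    ring
  rw [this]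
  exact key.mul_left _

lemma geom_bound (d : ℤ) (hd : 2 ≤ d) : ∀ K : ℕ, ∑ j ∈ Finset.Icc 1 K, d ^ j < d ^ (K + 1) := by
  intro K
  induction K with
  | zero => simp; positivity
  | succ K ih =>
    have hins : Finset.Icc 1 (K + 1) = insert (K + 1) (Finset.Icc 1 K) := by
      ext x; simp only [Finset.mem_Icc, Finset.mem_insert]; omega
    rw [hins, Finset.sum_insert (by simp)]
    have h2 : d ^ (K + 1) + d ^ (K + 1) ≤ d ^ (K + 2) := by
      have : d ^ (K + 2) = d * d ^ (K + 1) := by ring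
      nlinarith [pow_pos (by omega : (0:ℤ) < d) (K + 1)]
    linarith

lemma moebius_bounds (m : ℕ) : -1 ≤ (μ m : ℤ) ∧ (μ m : ℤ) ≤ 1 := by
  rcases moebius_eq_or m with h | h | h <;> rw [h] <;> norm_num

lemma witt_sum_nonneg (n d : ℕ) (hn : 1 ≤ n) :
    0 ≤ ∑ m ∈ n.divisors, (ArithmeticFunction.moebius m) * (d : ℤ) ^ (n / m) := by
  have hn0 : n ≠ 0 := by omega
  rcases Nat.lt_or_ge d 2 with hd | hd
  · interval_cases d
    · apply le_of_eq
      symm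
      apply Finset.sum_eq_zero
      intro m hm
      have hmn : m ∣ n := (Nat.mem_divisors.mp hm).1
      have : 0 < n / m := Nat.div_pos (Nat.le_of_dvd (by omega) hmn)
        (Nat.pos_of_mem_divisors hm)
      rw [Nat.cast_zero, zero_pow (by omega), mul_zero]
    · simp only [Nat.cast_one, one_pow, mul_one]
      have : (∑ m ∈ n.divisors, (μ m : ℤ)) = (μ * ζ : ArithmeticFunction ℤ) n := by
        rw [coe_mul_zeta_apply]
      rw [this, moebius_mul_coe_zeta]
      by_cases h1 : n = 1 <;> simp [h1]
  · have hd2 : (2 : ℤ) ≤ (d : ℤ) := by exact_mod_cast hd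
    have h1mem : 1 ∈ n.divisors := Nat.one_mem_divisors.mpr hn0
    rw [← Finset.add_sum_erase _ _ h1mem]
    simp only [ArithmeticFunction.moebius_apply_one, Nat.div_one, Int.cast_one, one_mul]
    set T := n.divisors.erase 1 with hT
    have hinj : ∀ m1 ∈ T, ∀ m2 ∈ T, n / m1 = n / m2 → m1 = m2 := by
      intro m1 hm1 m2 hm2 h
      have d1 : m1 ∣ n := (Nat.mem_divisors.mp (Finset.mem_of_mem_erase hm1)).1
      have d2 : m2 ∣ n := (Nat.mem_divisors.mp (Finset.mem_of_mem_erase hm2)).1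
      rw [← Nat.div_div_self d1 hn0, ← Nat.div_div_self d2 hn0, h]
    have himsub : T.image (n / ·) ⊆ Finset.Icc 1 (n - 1) := by
      intro j hj
      obtain ⟨m, hm, rfl⟩ := Finset.mem_image.mp hj
      have hmd : m ∣ n := (Nat.mem_divisors.mp (Finset.mem_of_mem_erase hm)).1
      have hm1 : m ≠ 1 := Finset.ne_of_mem_erase hm
      have hm2 : 2 ≤ m := by
        have := Nat.pos_of_mem_divisors (Finset.mem_of_mem_erase hm)
        omega
      have hub : n / m ≤ n / 2 := Nat.div_le_div_left hm2 (by omega)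
      have hlb : 0 < n / m := Nat.div_pos (Nat.le_of_dvd (by omega) hmd)
        (by omega)
      have : n / 2 ≤ n - 1 := by omega
      exact Finset.mem_Icc.mpr ⟨hlb, le_trans hub this⟩
    have hbound : ∑ m ∈ T, (d : ℤ) ^ (n / m) ≤ (d : ℤ) ^ n := by
      rw [← Finset.sum_image hinj]
      calc ∑ j ∈ T.image (n / ·), (d : ℤ) ^ j
          ≤ ∑ j ∈ Finset.Icc 1 (n - 1), (d : ℤ) ^ j := by
            apply Finset.sum_le_sum_of_subset_of_nonneg himsub
            intro j _ _
            positivity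
        _ ≤ (d : ℤ) ^ (n - 1 + 1) := le_of_lt (geom_bound (d : ℤ) hd2 (n - 1))
        _ = (d : ℤ) ^ n := by congr 1; omega
    have hterm : ∀ m ∈ T, -((d : ℤ) ^ (n / m)) ≤ (μ m : ℤ) * (d : ℤ) ^ (n / m) := by
      intro m _
      have h1 := (moebius_bounds m).1
      have h2 : (0 : ℤ) ≤ (d : ℤ) ^ (n / m) := by positivity
      nlinarith
    have : -∑ m ∈ T, (d : ℤ) ^ (n / m) ≤ ∑ m ∈ T, (μ m : ℤ) * (d : ℤ) ^ (n / m) := by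
      rw [← Finset.sum_neg_distrib]
      exact Finset.sum_le_sum hterm
    linarith

theorem witt_int_valued (n d : ℕ) (hn : 1 ≤ n) :
    (n : ℤ) ∣ ∑ m ∈ n.divisors, (ArithmeticFunction.moebius m) * (d : ℤ) ^ (n / m) ∧
    0 ≤ wittInt n d := by
  have hn0 : n ≠ 0 := by omega
  have hdvd : (n : ℤ) ∣ ∑ m ∈ n.divisors, (ArithmeticFunction.moebius m) * (d : ℤ) ^ (n / m) := by
    have hfact : (∏ p ∈ n.primeFactors, p ^ n.factorization p) = n := by
      conv_rhs => rw [← Nat.factorization_prod_pow_eq_self hn0]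
      rfl
    have hcast : (n : ℤ) = ∏ p ∈ n.primeFactors, (p : ℤ) ^ n.factorization p := by
      conv_lhs => rw [← hfact]
      push_cast
      rfl
    rw [hcast]
    apply Finset.prod_dvd_of_coprime
    · intro a ha b hb hab
      have hpa : a.Prime := Nat.prime_of_mem_primeFactors ha
      have hpb : b.Prime := Nat.prime_of_mem_primeFactors hb
      have : Nat.Coprime a b := (Nat.coprime_primes hpa hpb).mpr hab
      exact (this.isCoprime).pow
    · intro p hp
      exact prime_pow_dvd_sum n d p hn0 (Nat.prime_of_mem_primeFactors hp)
        (Nat.dvd_of_mem_primeFactors hp)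
  refine ⟨hdvd, ?_⟩
  unfold wittInt
  exact Int.ediv_nonneg (witt_sum_nonneg n d hn) (by positivity)
end

section
/- If F is a free group freely generated by a set X and π = ∏_{i=1}^{t}(c_i+1), then the iterated lower central subgroup ρ_t(F) = γ_{c_t+1}(γ_{c_{t−1}+1}(...(γ_{c_1+1}(F))...)) is contained in γ_π(F). -/
/-- `γ_{c+1}(H)` of a subgroup `H ≤ F`, viewed as a subgroup of `F`. -/
def gammaOf {F : Type*} [Group F] (H : Subgroup F) (c : ℕ) : Subgroup F :=
  ((⊤ : Subgroup H).lowerCentralSeries c).map H.subtype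

/-- The iterated lower central subgroup
`ρ_t(F) = γ_{c_t+1}(γ_{c_{t-1}+1}(⋯(γ_{c_1+1}(F))⋯))` for the class row `cs = [c_1,…,c_t]`. -/
def rho (F : Type*) [Group F] (cs : List ℕ) : Subgroup F :=
  cs.foldl (fun H c => gammaOf H c) ⊤

/-- Three subgroups lemma modulo a normal subgroup. -/
theorem commutator_commutator_le_of_rotate {G : Type*} [Group G]
    {H₁ H₂ H₃ N : Subgroup G} [N.Normal]
    (h1 : ⁅⁅H₂, H₃⁆, H₁⁆ ≤ N) (h2 : ⁅⁅H₃, H₁⁆, H₂⁆ ≤ N) :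
    ⁅⁅H₁, H₂⁆, H₃⁆ ≤ N := by
  let f := QuotientGroup.mk' N
  have key : ∀ A B C : Subgroup G,
      (⁅⁅A, B⁆, C⁆ ≤ N ↔ ⁅⁅A.map f, B.map f⁆, C.map f⁆ = ⊥) := by
    intro A B C
    rw [← Subgroup.map_commutator, ← Subgroup.map_commutator,
      Subgroup.map_eq_bot_iff, QuotientGroup.ker_mk']
  rw [key]
  exact Subgroup.commutator_commutator_eq_bot_of_rotate
    ((key _ _ _).mp h1) ((key _ _ _).mp h2)

/-- `⁅γ_{m+1}(G), γ_{n+1}(G)⁆ ≤ γ_{m+n+2}(G)` (0-indexed lower central series). -/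
theorem commutator_lcs_lcs_le {G : Type*} [Group G] (m n : ℕ) :
    ⁅(⊤ : Subgroup G).lowerCentralSeries m, (⊤ : Subgroup G).lowerCentralSeries n⁆ ≤
      (⊤ : Subgroup G).lowerCentralSeries (m + n + 1) := by
  induction n generalizing m with
  | zero =>
    have : (⊤ : Subgroup G).lowerCentralSeries (m + 1) = ⁅(⊤ : Subgroup G).lowerCentralSeries m, ⊤⁆ := rfl
    rw [Nat.add_zero, this]
    exact Subgroup.commutator_mono le_rfl le_top
  | succ n ih =>
    have hsucc : (⊤ : Subgroup G).lowerCentralSeries (n + 1) = ⁅(⊤ : Subgroup G).lowerCentralSeries n, ⊤⁆ := rfl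
    rw [hsucc]
    rw [Subgroup.commutator_comm]
    apply commutator_commutator_le_of_rotate
    · -- ⁅⁅⊤, γ m⁆, γ n⁆ ≤ γ (m+n+2)
      calc ⁅⁅(⊤ : Subgroup G), (⊤ : Subgroup G).lowerCentralSeries m⁆, (⊤ : Subgroup G).lowerCentralSeries n⁆
          = ⁅⁅(⊤ : Subgroup G).lowerCentralSeries m, (⊤ : Subgroup G)⁆, (⊤ : Subgroup G).lowerCentralSeries n⁆ := by
            rw [Subgroup.commutator_comm (⊤ : Subgroup G)]
        _ = ⁅(⊤ : Subgroup G).lowerCentralSeries (m + 1), (⊤ : Subgroup G).lowerCentralSeries n⁆ := rfl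
        _ ≤ (⊤ : Subgroup G).lowerCentralSeries (m + 1 + n + 1) := ih (m + 1)
        _ = (⊤ : Subgroup G).lowerCentralSeries (m + (n + 1) + 1) := by ring_nf
    · -- ⁅⁅γ m, γ n⁆, ⊤⁆ ≤ γ (m+n+2)
      calc ⁅⁅(⊤ : Subgroup G).lowerCentralSeries m, (⊤ : Subgroup G).lowerCentralSeries n⁆, (⊤ : Subgroup G)⁆
          ≤ ⁅(⊤ : Subgroup G).lowerCentralSeries (m + n + 1), (⊤ : Subgroup G)⁆ :=
            Subgroup.commutator_mono (ih m) le_rfl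
        _ = (⊤ : Subgroup G).lowerCentralSeries (m + n + 2) := rfl
        _ = (⊤ : Subgroup G).lowerCentralSeries (m + (n + 1) + 1) := by ring_nf

/-- If `H ≤ γ_{m+1}(G)` then `γ_{c+1}(H) ≤ γ_{(m+1)(c+1)}(G)`. -/
theorem gammaOf_le_lcs {G : Type*} [Group G] {H : Subgroup G} {m : ℕ}
    (hH : H ≤ (⊤ : Subgroup G).lowerCentralSeries m) (c : ℕ) :
    gammaOf H c ≤ (⊤ : Subgroup G).lowerCentralSeries (m * c + m + c) := by
  induction c with
  | zero =>
    intro x hx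
    obtain ⟨y, -, rfl⟩ := hx
    simpa using hH y.2
  | succ c ih =>
    have : gammaOf H (c + 1) =
        ⁅gammaOf H c, H⁆ := by
      unfold gammaOf
      have : (⊤ : Subgroup H).lowerCentralSeries (c + 1) = ⁅(⊤ : Subgroup H).lowerCentralSeries c, ⊤⁆ := rfl
      rw [this, Subgroup.map_commutator]
      congr 1
      ext x
      simp [Subgroup.mem_map]
    rw [this]
    calc ⁅gammaOf H c, H⁆
        ≤ ⁅(⊤ : Subgroup G).lowerCentralSeries (m * c + m + c), (⊤ : Subgroup G).lowerCentralSeries m⁆ :=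
          Subgroup.commutator_mono ih hH
      _ ≤ (⊤ : Subgroup G).lowerCentralSeries (m * c + m + c + m + 1) := commutator_lcs_lcs_le _ _
      _ = (⊤ : Subgroup G).lowerCentralSeries (m * (c + 1) + m + (c + 1)) := by ring_nf

theorem foldl_gammaOf_le {G : Type*} [Group G] (cs : List ℕ) :
    ∀ (H : Subgroup G) (m : ℕ), H ≤ (⊤ : Subgroup G).lowerCentralSeries m →
      cs.foldl (fun H c => gammaOf H c) H ≤
        (⊤ : Subgroup G).lowerCentralSeries ((m + 1) * (cs.map (· + 1)).prod - 1) := by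
  induction cs with
  | nil =>
    intro H m hH
    simpa using hH
  | cons c cs ih =>
    intro H m hH
    have h1 : gammaOf H c ≤ (⊤ : Subgroup G).lowerCentralSeries (m * c + m + c) :=
      gammaOf_le_lcs hH c
    have h2 := ih (gammaOf H c) (m * c + m + c) h1
    simp only [List.foldl_cons, List.map_cons, List.prod_cons]
    convert h2 using 3
    ring

/-- If `F` is a free group and `π = ∏ (c_i + 1)`, then `ρ_t(F) ≤ γ_π(F)`.
Note `γ_π(F) = lowerCentralSeries F (π - 1)`. -/
theorem rho_le_gamma_prod {α : Type*} (cs : List ℕ) :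
    rho (FreeGroup α) cs ≤
      (⊤ : Subgroup (FreeGroup α)).lowerCentralSeries ((cs.map (· + 1)).prod - 1) := by
  have := foldl_gammaOf_le (G := FreeGroup α) cs ⊤ 0 (by simp)
  simpa [rho] using this
end
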